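/- Let G=(V,E) be a connected simple graph containing at least one cycle, and let X_0 be a random 3-coloring of V drawn from the uniform product measure on (ℤ/3ℤ)^V. Then, with positive probability, the 3-color CCA trajectory (X_t)_{t≥0} oscillates, i.e., its activity α is strictly positive. -/

import Mathlib

noncomputable section
attribute [local instance] Classical.propDecidable

open Filter MeasureTheory

variable {V : Type*}

/-- One step of the 3-color cyclic cellular automaton. -/
def ccaStep (G : SimpleGraph V) (X : V → ZMod 3) : V → ZMod 3 :=
  fun v => if ∃ u, G.Adj v u ∧ X u = X v + 1 then X v + 1 else X v

/-- The CCA trajectory started from `X₀`. -/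
def ccaTraj (G : SimpleGraph V) (X₀ : V → ZMod 3) : ℕ → V → ZMod 3 :=
  fun t => (ccaStep G)^[t] X₀

/-- A vertex is excited at time `t` for CCA iff its color advances. -/
def ccaExcited (G : SimpleGraph V) (X₀ : V → ZMod 3) (t : ℕ) (v : V) : Prop :=
  ccaTraj G X₀ (t + 1) v = ccaTraj G X₀ t v + 1

/-- Number of excitations of `x` at times `0, …, t-1` (CCA). -/
def ccaNe (G : SimpleGraph V) (X₀ : V → ZMod 3) (t : ℕ) (x : V) : ℕ :=
  ((Finset.range t).filter fun s => ccaExcited G X₀ s x).card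

namespace CCAaux

/-- integer representative of an element of `ZMod 3` in `{-1,0,1}`. -/
def rep3 : ZMod 3 → ℤ := ![0, 1, -1]

lemma rep3_cases (z : ZMod 3) : rep3 z = 0 ∨ rep3 z = 1 ∨ rep3 z = -1 := by
  fin_cases z <;> simp [rep3]

lemma rep3_le_one (z : ZMod 3) : rep3 z ≤ 1 := by
  rcases rep3_cases z with h | h | h <;> rw [h] <;> norm_num

lemma neg_one_le_rep3 (z : ZMod 3) : -1 ≤ rep3 z := by
  rcases rep3_cases z with h | h | h <;> rw [h] <;> norm_num

lemma rep3_one : rep3 1 = 1 := rfl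

lemma rep3_eq_one {z : ZMod 3} (h : rep3 z = 1) : z = 1 := by
  fin_cases z <;> simp_all [rep3] <;> rfl

lemma rep3_key (d : ZMod 3) (a b : Prop) (h1 : d = 1 → b) (h2 : d = 2 → a) :
    rep3 (d + ((if a then 1 else 0) - (if b then 1 else 0))) =
      rep3 d + ((if a then (1 : ℤ) else 0) - (if b then 1 else 0)) := by
  classical
  by_cases ha : a <;> by_cases hb : b <;> simp only [if_pos, if_neg, ha, hb, ite_true, ite_false]
  · simp
  · -- a true, b false : d ≠ 1
    have hd : d ≠ 1 := fun h => hb (h1 h)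
    fin_cases d <;> simp_all [rep3]
    · rfl
    · exact absurd rfl hd
    · rfl
  · -- a false, b true : d ≠ 2
    have hd : d ≠ 2 := fun h => ha (h2 h)
    fin_cases d <;> simp_all [rep3]
    · rfl
    · rfl
    · exact absurd rfl hd
  · have hd1 : d ≠ 1 := fun h => hb (h1 h)
    have hd2 : d ≠ 2 := fun h => ha (h2 h)
    fin_cases d <;> simp_all [rep3] <;> decide

variable {G : SimpleGraph V} {ω : V → ZMod 3}

lemma traj_succ (t : ℕ) (w : V) :
    ccaTraj G ω (t + 1) w = ccaStep G (ccaTraj G ω t) w := by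
  simp [ccaTraj, Function.iterate_succ_apply']

lemma excited_iff (t : ℕ) (w : V) :
    ccaExcited G ω t w ↔ ∃ u, G.Adj w u ∧ ccaTraj G ω t u = ccaTraj G ω t w + 1 := by
  unfold ccaExcited
  rw [traj_succ]
  unfold ccaStep
  split_ifs with hcond
  · simpa using hcond
  · constructor
    · intro habs
      exfalso
      have : (1 : ZMod 3) = 0 := (left_eq_add.mp habs)
      exact one_ne_zero this
    · intro h; exact absurd h hcond

lemma traj_succ_eq (t : ℕ) (w : V) :
    ccaTraj G ω (t + 1) w
      = ccaTraj G ω t w + (if ccaExcited G ω t w then 1 else 0) := by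
  classical
  by_cases hE : ccaExcited G ω t w
  · rw [if_pos hE]; exact hE
  · rw [if_neg hE, add_zero, traj_succ]
    unfold ccaStep
    split_ifs with hcond
    · exact absurd ((excited_iff t w).mpr hcond) hE
    · rfl

/-- integer indicator of excitation -/
def exc (G : SimpleGraph V) (ω : V → ZMod 3) (t : ℕ) (w : V) : ℤ :=
  if ccaExcited G ω t w then 1 else 0

lemma exc_nonneg (t : ℕ) (w : V) : 0 ≤ exc G ω t w := by
  unfold exc; split_ifs <;> norm_num

lemma exc_eq_one {t : ℕ} {w : V} (h : ccaExcited G ω t w) : exc G ω t w = 1 := by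
  simp [exc, h]

lemma ne_sum (t : ℕ) (x : V) :
    (ccaNe G ω t x : ℤ) = ∑ s ∈ Finset.range t, exc G ω s x := by
  classical
  unfold ccaNe exc
  rw [Finset.card_filter]
  push_cast
  rfl

lemma edge_step (t : ℕ) {u w : V} (h : G.Adj u w) :
    rep3 (ccaTraj G ω (t + 1) u - ccaTraj G ω (t + 1) w)
      = rep3 (ccaTraj G ω t u - ccaTraj G ω t w) + exc G ω t u - exc G ω t w := by
  classical
  have hu := traj_succ_eq (G := G) (ω := ω) t u
  have hw := traj_succ_eq (G := G) (ω := ω) t w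
  rw [hu, hw]
  have harr : ccaTraj G ω t u + (if ccaExcited G ω t u then (1 : ZMod 3) else 0)
      - (ccaTraj G ω t w + (if ccaExcited G ω t w then (1 : ZMod 3) else 0))
      = (ccaTraj G ω t u - ccaTraj G ω t w)
        + ((if ccaExcited G ω t u then (1 : ZMod 3) else 0)
          - (if ccaExcited G ω t w then (1 : ZMod 3) else 0)) := by ring
  rw [harr]
  have h1 : ccaTraj G ω t u - ccaTraj G ω t w = 1 → ccaExcited G ω t w := by
    intro hd
    rw [excited_iff]
    exact ⟨u, h.symm, by rw [sub_eq_iff_eq_add] at hd; rw [hd]; ring⟩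
  have h2 : ccaTraj G ω t u - ccaTraj G ω t w = 2 → ccaExcited G ω t u := by
    intro hd
    rw [excited_iff]
    refine ⟨w, h, ?_⟩
    rw [sub_eq_iff_eq_add] at hd
    rw [hd]
    have : (2 : ZMod 3) + ccaTraj G ω t w + 1 = ccaTraj G ω t w + 3 := by ring
    rw [this]
    have h3 : (3 : ZMod 3) = 0 := rfl
    rw [h3, add_zero]
  have := rep3_key (ccaTraj G ω t u - ccaTraj G ω t w)
      (ccaExcited G ω t u) (ccaExcited G ω t w) h1 h2
  rw [this]
  unfold exc
  ring

lemma edge_tel {u w : V} (h : G.Adj u w) (t : ℕ) :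
    rep3 (ccaTraj G ω t u - ccaTraj G ω t w)
      = rep3 (ccaTraj G ω 0 u - ccaTraj G ω 0 w)
        + (ccaNe G ω t u : ℤ) - (ccaNe G ω t w : ℤ) := by
  induction t with
  | zero => simp [ccaNe]
  | succ t ih =>
      rw [edge_step t h, ih, ne_sum, ne_sum, ne_sum, ne_sum, Finset.sum_range_succ,
        Finset.sum_range_succ]
      ring

lemma edge_ne_bound {u w : V} (h : G.Adj u w) (t : ℕ) :
    (ccaNe G ω t w : ℤ) ≤ (ccaNe G ω t u : ℤ) + 2 := by
  have h1 := edge_tel (ω := ω) h t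
  have h2 := neg_one_le_rep3 (ccaTraj G ω t u - ccaTraj G ω t w)
  have h3 := rep3_le_one (ccaTraj G ω 0 u - ccaTraj G ω 0 w)
  linarith

lemma walk_ne_bound {a b : V} (p : G.Walk a b) (t : ℕ) :
    (ccaNe G ω t b : ℤ) ≤ (ccaNe G ω t a : ℤ) + 2 * p.length := by
  induction p with
  | nil => simp
  | cons h q ih =>
      have h1 := edge_ne_bound (ω := ω) h t
      rw [SimpleGraph.Walk.length_cons]
      push_cast
      push_cast at ih
      linarith

lemma walk_support_getElem {u w : V} (p : G.Walk u w) :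
    ∀ (i : ℕ) (h : i < p.support.length), p.support[i] = p.getVert i := by
  induction p with
  | nil =>
      intro i h
      simp only [SimpleGraph.Walk.support_nil, List.length_singleton] at h
      interval_cases i
      rfl
  | cons ha q ih =>
      intro i h
      cases i with
      | zero => simp [SimpleGraph.Walk.support_cons]
      | succ j =>
          simp only [SimpleGraph.Walk.support_cons, List.getElem_cons_succ,
            SimpleGraph.Walk.getVert_cons_succ]
          apply ih

lemma cycle_getVert_inj {v : V} {c : G.Walk v v} (hc : c.IsCycle)
    {i j : ℕ} (hi : i < c.length) (hj : j < c.length)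
    (hij : c.getVert i = c.getVert j) : i = j := by
  have hls : c.support.length = c.length + 1 := c.length_support
  have hnd := hc.support_nodup
  have htl : c.support.tail.length = c.length := by
    rw [List.length_tail, hls]; omega
  have hget : ∀ (k : ℕ) (h : k < c.length), c.support.tail[k]'(by omega) = c.getVert (k + 1) := by
    intro k h
    rw [List.getElem_tail]
    exact walk_support_getElem c (k + 1) (by omega)
  -- getVert n = getVert 0 = v
  have hend : c.getVert c.length = c.getVert 0 := by
    rw [c.getVert_length, c.getVert_zero]
  have key : ∀ (k l : ℕ), k < c.length → l ≤ c.length → 1 ≤ k → 1 ≤ l →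
      c.getVert k = c.getVert l → k = l := by
    intro k l hk hl hk1 hl1 hkl
    have h1 : c.support.tail[k - 1]'(by omega) = c.support.tail[l - 1]'(by omega) := by
      rw [hget (k - 1) (by omega), hget (l - 1) (by omega)]
      have : k - 1 + 1 = k := by omega
      rw [this]
      have : l - 1 + 1 = l := by omega
      rw [this]
      exact hkl
    have := (List.Nodup.getElem_inj_iff hnd).mp h1
    omega
  rcases Nat.eq_zero_or_pos i with hi0 | hi1
  · rcases Nat.eq_zero_or_pos j with hj0 | hj1
    · omega
    · -- i = 0, j ≥ 1 : getVert j = getVert 0 = getVert length, so j = length, contra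
      exfalso
      subst hi0
      have : c.getVert j = c.getVert c.length := by rw [hend, hij]
      have := key j c.length hj (le_refl _) hj1 (by omega) this
      omega
  · rcases Nat.eq_zero_or_pos j with hj0 | hj1
    · exfalso
      subst hj0
      have : c.getVert i = c.getVert c.length := by rw [hend, ← hij]
      have := key i c.length hi (le_refl _) hi1 (by omega) this
      omega
    · exact key i j hi (le_of_lt hj) hi1 hj1 hij

end CCAaux

open CCAaux in
/-- If a connected graph contains a cycle, then under the uniform product measure on
initial 3-colorings the CCA trajectory oscillates (has strictly positive activity at
every vertex) with positive probability. -/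
theorem cca_oscillates_with_positive_probability (G : SimpleGraph V)
    (hlf : ∀ v : V, (G.neighborSet v).Finite) (hconn : G.Connected)
    (v : V) (c : G.Walk v v) (hc : c.IsCycle)
    (μ : Measure (V → ZMod 3)) [IsProbabilityMeasure μ]
    (hμ : ∀ (s : Finset V) (κ : V → ZMod 3),
      μ {ω : V → ZMod 3 | ∀ u ∈ s, ω u = κ u} = (1 / 3 : ENNReal) ^ s.card) :
    0 < μ {ω : V → ZMod 3 |
      ∀ x : V, 0 < limsup (fun t : ℕ => (ccaNe G ω t x : ℝ) / t) atTop} := by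
  classical
  set n := c.length with hn
  have hn3 : 3 ≤ n := hc.three_le_length
  set κ : V → ZMod 3 := fun u =>
    if h : ∃ i, i < n ∧ c.getVert i = u then ((Nat.find h : ℕ) : ZMod 3) else 0 with hκdef
  have hκ : ∀ i, i < n → κ (c.getVert i) = (i : ZMod 3) := by
    intro i hi
    have hex : ∃ j, j < n ∧ c.getVert j = c.getVert i := ⟨i, hi, rfl⟩
    have hsp := Nat.find_spec hex
    have hfind : Nat.find hex = i := cycle_getVert_inj hc hsp.1 hi hsp.2
    simp only [hκdef]
    rw [dif_pos hex, hfind]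
  set s : Finset V := c.support.toFinset with hsdef
  have hmem : ∀ i, i ≤ n → c.getVert i ∈ s := by
    intro i hi
    rw [hsdef, List.mem_toFinset, SimpleGraph.Walk.mem_support_iff_exists_getVert]
    exact ⟨i, rfl, hi⟩
  have hposE : 0 < μ {ω : V → ZMod 3 | ∀ u ∈ s, ω u = κ u} := by
    rw [hμ s κ]
    apply ENNReal.pow_pos
    norm_num
  refine lt_of_lt_of_le hposE (measure_mono ?_)
  intro ω hω
  simp only [Set.mem_setOf_eq] at hω ⊢
  have hendv : c.getVert n = c.getVert 0 := by
    rw [hn, c.getVert_length, c.getVert_zero]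
  set W : ℕ → ℤ := fun t => ∑ i ∈ Finset.range n,
    rep3 (ccaTraj G ω t (c.getVert (i + 1)) - ccaTraj G ω t (c.getVert i)) with hWdef
  have hWconst : ∀ t, W t = W 0 := by
    intro t
    induction t with
    | zero => rfl
    | succ t ih =>
        rw [← ih]
        simp only [hWdef]
        have hcongr : ∀ i ∈ Finset.range n,
            rep3 (ccaTraj G ω (t+1) (c.getVert (i + 1)) - ccaTraj G ω (t+1) (c.getVert i))
              = rep3 (ccaTraj G ω t (c.getVert (i + 1)) - ccaTraj G ω t (c.getVert i))
                + (exc G ω t (c.getVert (i+1)) - exc G ω t (c.getVert i)) := by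
          intro i hi
          rw [Finset.mem_range] at hi
          have := edge_step (ω := ω) t ((c.adj_getVert_succ hi).symm)
          rw [this]; ring
        rw [Finset.sum_congr rfl hcongr, Finset.sum_add_distrib,
          Finset.sum_range_sub (fun i => exc G ω t (c.getVert i)), hendv]
        simp
  have htraj0 : ∀ w, ccaTraj G ω 0 w = ω w := fun w => rfl
  have hW0 : 1 ≤ W 0 := by
    obtain ⟨m, hm⟩ : ∃ m, n = m + 1 := ⟨n - 1, by omega⟩
    have hterm : ∀ i ∈ Finset.range m,
        rep3 (ccaTraj G ω 0 (c.getVert (i + 1)) - ccaTraj G ω 0 (c.getVert i)) = 1 := by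
      intro i hi
      rw [Finset.mem_range] at hi
      rw [htraj0, htraj0, hω _ (hmem (i+1) (by omega)), hω _ (hmem i (by omega)),
        hκ (i+1) (by omega), hκ i (by omega)]
      rw [show ((↑(i+1) : ZMod 3) - ↑i) = 1 from by push_cast; ring]
      exact rep3_one
    simp only [hWdef]
    rw [hm, Finset.sum_range_succ, Finset.sum_congr rfl hterm, Finset.sum_const,
      Finset.card_range, nsmul_eq_mul, mul_one]
    have := neg_one_le_rep3 (ccaTraj G ω 0 (c.getVert (m + 1)) - ccaTraj G ω 0 (c.getVert m))
    have hm2 : 2 ≤ m := by omega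
    have : (2:ℤ) ≤ m := by exact_mod_cast hm2
    linarith
  have hexc : ∀ t, ∃ i, i < n ∧ ccaExcited G ω t (c.getVert i) := by
    intro t
    have h1 : 1 ≤ W t := by rw [hWconst t]; exact hW0
    by_contra hno
    push_neg at hno
    have hle : ∀ i ∈ Finset.range n,
        rep3 (ccaTraj G ω t (c.getVert (i + 1)) - ccaTraj G ω t (c.getVert i)) ≤ 0 := by
      intro i hi
      rw [Finset.mem_range] at hi
      by_contra hgt
      push_neg at hgt
      have hone : rep3 (ccaTraj G ω t (c.getVert (i + 1)) - ccaTraj G ω t (c.getVert i)) = 1 := by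
        rcases rep3_cases (ccaTraj G ω t (c.getVert (i + 1)) - ccaTraj G ω t (c.getVert i))
          with h | h | h <;> omega
      have hz := rep3_eq_one hone
      apply hno i hi
      rw [excited_iff]
      refine ⟨c.getVert (i+1), c.adj_getVert_succ hi, ?_⟩
      rw [sub_eq_iff_eq_add] at hz
      rw [hz]; ring
    have h2 : W t ≤ 0 := Finset.sum_nonpos hle
    omega
  have hsum : ∀ t : ℕ, (t : ℤ) ≤ ∑ i ∈ Finset.range n, (ccaNe G ω t (c.getVert i) : ℤ) := by
    intro t
    have h1 : ∀ sᵤ ∈ Finset.range t,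
        (1:ℤ) ≤ ∑ i ∈ Finset.range n, exc G ω sᵤ (c.getVert i) := by
      intro sᵤ _
      obtain ⟨i, hi, hex⟩ := hexc sᵤ
      calc (1:ℤ) = exc G ω sᵤ (c.getVert i) := (exc_eq_one hex).symm
        _ ≤ ∑ i ∈ Finset.range n, exc G ω sᵤ (c.getVert i) :=
          Finset.single_le_sum (fun j _ => exc_nonneg sᵤ (c.getVert j)) (Finset.mem_range.mpr hi)
    calc (t:ℤ) = ∑ _sᵤ ∈ Finset.range t, (1:ℤ) := by simp
      _ ≤ ∑ sᵤ ∈ Finset.range t, ∑ i ∈ Finset.range n, exc G ω sᵤ (c.getVert i) :=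
          Finset.sum_le_sum h1
      _ = ∑ i ∈ Finset.range n, ∑ sᵤ ∈ Finset.range t, exc G ω sᵤ (c.getVert i) :=
          Finset.sum_comm
      _ = ∑ i ∈ Finset.range n, (ccaNe G ω t (c.getVert i) : ℤ) := by
          refine Finset.sum_congr rfl fun i _ => ?_
          rw [ne_sum]
  have hpig : ∃ i, i < n ∧ ∃ᶠ t : ℕ in atTop,
      (t : ℤ) ≤ n * (ccaNe G ω t (c.getVert i) : ℤ) := by
    by_contra hcon
    push_neg at hcon
    have hev : ∀ i ∈ Finset.range n, ∀ᶠ t : ℕ in atTop,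
        ¬ ((t : ℤ) ≤ n * (ccaNe G ω t (c.getVert i) : ℤ)) := by
      intro i hi
      rw [Finset.mem_range] at hi
      exact (hcon i hi).mono fun t ht => not_le.mpr ht
    obtain ⟨t, ht⟩ := ((Filter.eventually_all_finset (Finset.range n)).mpr hev).exists
    have hlt : ∀ i ∈ Finset.range n,
        (n:ℤ) * (ccaNe G ω t (c.getVert i) : ℤ) ≤ (t:ℤ) - 1 := by
      intro i hi
      have := ht i hi
      omega
    have h1 : (n:ℤ) * t ≤ ∑ i ∈ Finset.range n, (n:ℤ) * (ccaNe G ω t (c.getVert i) : ℤ) := by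
      rw [← Finset.mul_sum]
      exact mul_le_mul_of_nonneg_left (hsum t) (by positivity)
    have h2 : ∑ i ∈ Finset.range n, (n:ℤ) * (ccaNe G ω t (c.getVert i) : ℤ)
        ≤ ∑ _i ∈ Finset.range n, ((t:ℤ) - 1) := Finset.sum_le_sum hlt
    rw [Finset.sum_const, Finset.card_range, nsmul_eq_mul] at h2
    have hnZ : (3:ℤ) ≤ n := by exact_mod_cast hn3
    nlinarith
  obtain ⟨i, hi, hfreq⟩ := hpig
  intro x
  obtain ⟨p⟩ : G.Reachable x (c.getVert i) := hconn.preconnected x (c.getVert i)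
  set L := p.length with hL
  have hbound : ∀ t : ℕ, (ccaNe G ω t (c.getVert i) : ℤ) ≤ (ccaNe G ω t x : ℤ) + 2 * L :=
    fun t => walk_ne_bound p t
  have hnR : (0:ℝ) < n := by
    have : 0 < n := by omega
    exact_mod_cast this
  refine lt_of_lt_of_le (show (0:ℝ) < 1/(2*n) by positivity) ?_
  refine le_limsup_of_frequently_le ?_ ?_
  · have hfe := hfreq.and_eventually (eventually_ge_atTop (4*n*L + 1))
    refine hfe.mono ?_
    rintro t ⟨h1, h2⟩
    have h3 := hbound t
    have h4 : (t:ℤ) ≤ (n:ℤ) * ((ccaNe G ω t x : ℤ) + 2 * L) :=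
      le_trans h1 (mul_le_mul_of_nonneg_left h3 (by positivity))
    have h6 : ((4*n*L + 1 : ℕ) : ℤ) ≤ (t:ℤ) := by exact_mod_cast h2
    have h5 : (t:ℤ) ≤ 2 * n * (ccaNe G ω t x : ℤ) := by
      push_cast at h6 h4 ⊢
      nlinarith
    have htpos : (0:ℝ) < t := by
      have : 1 ≤ t := by omega
      exact_mod_cast this
    rw [le_div_iff₀ htpos]
    have h5R : (t:ℝ) ≤ 2 * n * (ccaNe G ω t x : ℝ) := by exact_mod_cast h5
    rw [div_mul_eq_mul_div, div_le_iff₀ (by positivity)]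
    linarith
  · refine isBoundedUnder_of ⟨1, fun t => ?_⟩
    cases t with
    | zero => simp [ccaNe]
    | succ t =>
        rw [div_le_one (by positivity)]
        have : ccaNe G ω (t+1) x ≤ t + 1 := by
          calc ccaNe G ω (t+1) x ≤ (Finset.range (t+1)).card := Finset.card_filter_le _ _
            _ = t + 1 := Finset.card_range _
        exact_mod_cast this
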